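/- For all integers n ≥ 2 and k ≥ 2, the characteristic polynomial of the adjacency matrix of W_{n,k} over ℝ equals (X² − 1)^{(k−1)n} · ∏_{j=0}^{n−1} ( X² − (k² + 1 + 2k·cos(2πj/n)) ). Equivalently, the spectrum of W_{n,k} consists of the eigenvalues 1 and −1, each with multiplicity (k−1)n, together with the pairs ±τ_j for j = 0, …, n−1, where τ_j = √(k² + 1 + 2k·cos(2πj/n)). -/

import Mathlib

open Polynomial

/-- Vertex set of `W n k`: `Sum.inl (i, j)` is the vertex `v_{i,j}` and
`Sum.inr (i, j)` is the vertex `w_{i,j}`, for `i ∈ ℤ/nℤ` and `j ∈ {1, …, k}`. -/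
abbrev WVert (n k : ℕ) : Type := (ZMod n × Fin k) ⊕ (ZMod n × Fin k)

/-- Adjacency of `W n k`: `v_{i,j} ~ w_{i',l}` iff `i' = i`, or `i = i' + 1` and `j = l`. -/
def WAdj (n k : ℕ) : WVert n k → WVert n k → Prop
  | Sum.inl p, Sum.inr q => q.1 = p.1 ∨ (p.1 = q.1 + 1 ∧ p.2 = q.2)
  | Sum.inr q, Sum.inl p => q.1 = p.1 ∨ (p.1 = q.1 + 1 ∧ p.2 = q.2)
  | Sum.inl _, Sum.inl _ => False
  | Sum.inr _, Sum.inr _ => False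

/-- The graph `W_{n,k}`: vertices `v_{i,j}` and `w_{i,j}` (`i ∈ ℤ/nℤ`, `1 ≤ j ≤ k`),
with edges `v_{i,j} w_{i,l}` for all `i, j, l`, and `w_{i,j} v_{i+1,j}` for all `i, j`. -/
def W (n k : ℕ) : SimpleGraph (WVert n k) where
  Adj := WAdj n k
  symm := by
    constructor
    rintro (p | p) (q | q) h
    · exact h.elim
    · exact h
    · exact h
    · exact h.elim
  loopless := by constructor; rintro (p | p) h <;> exact h

instance (n k : ℕ) : DecidableRel (WAdj n k) := fun a b =>
  match a, b with
  | Sum.inl p, Sum.inr q =>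
      inferInstanceAs (Decidable (q.1 = p.1 ∨ (p.1 = q.1 + 1 ∧ p.2 = q.2)))
  | Sum.inr q, Sum.inl p =>
      inferInstanceAs (Decidable (q.1 = p.1 ∨ (p.1 = q.1 + 1 ∧ p.2 = q.2)))
  | Sum.inl _, Sum.inl _ => inferInstanceAs (Decidable False)
  | Sum.inr _, Sum.inr _ => inferInstanceAs (Decidable False)

instance (n k : ℕ) : DecidableRel (W n k).Adj :=
  inferInstanceAs (DecidableRel (WAdj n k))

namespace Wcp
set_option linter.unusedSectionVars false

open Matrix

variable (n : ℕ)

noncomputable def ζ : ℂ := Complex.exp (2 * Real.pi * Complex.I / n)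

variable [NeZero n]

lemma hζ : IsPrimitiveRoot (ζ n) n := Complex.isPrimitiveRoot_exp n (NeZero.ne n)

lemma ζ_pow_n : ζ n ^ n = 1 := (hζ n).pow_eq_one

noncomputable def ee (m : ZMod n) : ℂ := ζ n ^ m.val

lemma ζ_pow_mod (x : ℕ) : ζ n ^ (x % n) = ζ n ^ x := by
  conv_rhs => rw [← Nat.mod_add_div x n]
  rw [pow_add, pow_mul, ζ_pow_n, one_pow, mul_one]

lemma ee_add (a b : ZMod n) : ee n (a + b) = ee n a * ee n b := by
  rw [ee, ee, ee, ZMod.val_add, ζ_pow_mod, pow_add]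

omit [NeZero n] in
lemma ee_zero : ee n 0 = 1 := by simp [ee]

lemma ee_mul_neg (m : ZMod n) : ee n m * ee n (-m) = 1 := by
  rw [← ee_add]; simp [ee_zero]

lemma ee_nat_mul (c : ℕ) (m : ZMod n) : ee n ((c : ZMod n) * m) = ee n m ^ c := by
  induction c with
  | zero => simpa using ee_zero n
  | succ c ih =>
    push_cast
    rw [add_mul, one_mul, ee_add, ih, pow_succ]

lemma sum_zmod_val (f : ℕ → ℂ) : ∑ l : ZMod n, f l.val = ∑ t ∈ Finset.range n, f t := by
  refine Finset.sum_nbij' (fun l : ZMod n => l.val) (fun t => (t : ZMod n)) ?_ ?_ ?_ ?_ ?_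
  · intro a _; exact Finset.mem_range.2 (ZMod.val_lt a)
  · intro a _; exact Finset.mem_univ _
  · intro a _; simp [ZMod.natCast_val, ZMod.cast_id]
  · intro a ha; exact ZMod.val_natCast_of_lt (Finset.mem_range.1 ha)
  · intro a _; rfl

lemma sum_ee (m : ZMod n) (hm : m ≠ 0) : ∑ l : ZMod n, ee n (l * m) = 0 := by
  have h1 : ∀ l : ZMod n, ee n (l * m) = ee n m ^ l.val := by
    intro l
    rw [← ee_nat_mul]
    congr 1
    rw [ZMod.natCast_val, ZMod.cast_id]
  simp_rw [h1]
  rw [sum_zmod_val n (fun t => ee n m ^ t)]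
  have hne : ee n m ≠ 1 := by
    have h0 : 0 < m.val := Nat.pos_of_ne_zero (fun h => hm ((ZMod.val_eq_zero m).1 h))
    exact (hζ n).pow_ne_one_of_pos_of_lt h0.ne' (ZMod.val_lt m)
  have hpow : ee n m ^ n = 1 := by
    rw [ee, ← pow_mul, mul_comm, pow_mul, ζ_pow_n, one_pow]
  rw [geom_sum_eq hne, hpow, sub_self, zero_div]

/- ## matrices -/

variable (k : ℕ)

noncomputable def Vm : Matrix (WVert n k) (WVert n k) ℂ := Matrix.of fun x y =>
  match x, y with
  | Sum.inl p, Sum.inl q => if p.2 = q.2 then ee n (p.1 * q.1) else 0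
  | Sum.inr p, Sum.inr q => if p.2 = q.2 then ee n (p.1 * q.1) else 0
  | _, _ => 0

noncomputable def VmInv : Matrix (WVert n k) (WVert n k) ℂ := Matrix.of fun x y =>
  match x, y with
  | Sum.inl p, Sum.inl q => if p.2 = q.2 then ee n (-(p.1 * q.1)) else 0
  | Sum.inr p, Sum.inr q => if p.2 = q.2 then ee n (-(p.1 * q.1)) else 0
  | _, _ => 0

noncomputable def Bm : Matrix (WVert n k) (WVert n k) ℂ := Matrix.of fun x y =>
  match x, y with
  | Sum.inl p, Sum.inr q => if p.1 = q.1 then 1 + (if p.2 = q.2 then ee n (-q.1) else 0) else 0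
  | Sum.inr p, Sum.inl q => if p.1 = q.1 then 1 + (if p.2 = q.2 then ee n q.1 else 0) else 0
  | _, _ => 0

@[simp] lemma Vm_ll (p q) : Vm n k (Sum.inl p) (Sum.inl q) = if p.2 = q.2 then ee n (p.1 * q.1) else 0 := rfl
@[simp] lemma Vm_rr (p q) : Vm n k (Sum.inr p) (Sum.inr q) = if p.2 = q.2 then ee n (p.1 * q.1) else 0 := rfl
@[simp] lemma Vm_lr (p q) : Vm n k (Sum.inl p) (Sum.inr q) = 0 := rfl
@[simp] lemma Vm_rl (p q) : Vm n k (Sum.inr p) (Sum.inl q) = 0 := rfl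

@[simp] lemma VmInv_ll (p q) : VmInv n k (Sum.inl p) (Sum.inl q) = if p.2 = q.2 then ee n (-(p.1 * q.1)) else 0 := rfl
@[simp] lemma VmInv_rr (p q) : VmInv n k (Sum.inr p) (Sum.inr q) = if p.2 = q.2 then ee n (-(p.1 * q.1)) else 0 := rfl
@[simp] lemma VmInv_lr (p q) : VmInv n k (Sum.inl p) (Sum.inr q) = 0 := rfl
@[simp] lemma VmInv_rl (p q) : VmInv n k (Sum.inr p) (Sum.inl q) = 0 := rfl

@[simp] lemma Bm_lr (p q) : Bm n k (Sum.inl p) (Sum.inr q) = if p.1 = q.1 then 1 + (if p.2 = q.2 then ee n (-q.1) else 0) else 0 := rfl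
@[simp] lemma Bm_rl (p q) : Bm n k (Sum.inr p) (Sum.inl q) = if p.1 = q.1 then 1 + (if p.2 = q.2 then ee n q.1 else 0) else 0 := rfl
@[simp] lemma Bm_ll (p q) : Bm n k (Sum.inl p) (Sum.inl q) = 0 := rfl
@[simp] lemma Bm_rr (p q) : Bm n k (Sum.inr p) (Sum.inr q) = 0 := rfl

@[simp] lemma WAdj_lr (p q) : (W n k).Adj (Sum.inl p) (Sum.inr q) ↔ (q.1 = p.1 ∨ (p.1 = q.1 + 1 ∧ p.2 = q.2)) := Iff.rfl
@[simp] lemma WAdj_rl (p q) : (W n k).Adj (Sum.inr p) (Sum.inl q) ↔ (p.1 = q.1 ∨ (q.1 = p.1 + 1 ∧ q.2 = p.2)) := Iff.rfl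
@[simp] lemma WAdj_ll (p q) : ¬ (W n k).Adj (Sum.inl p) (Sum.inl q) := fun h => h
@[simp] lemma WAdj_rr (p q) : ¬ (W n k).Adj (Sum.inr p) (Sum.inr q) := fun h => h

lemma one_ne_zero_zmod (hn : 2 ≤ n) : (1 : ZMod n) ≠ 0 := by
  haveI : Fact (1 < n) := ⟨hn⟩
  exact one_ne_zero

lemma sum_or_left (h1 : (1:ZMod n) ≠ 0) (i : ZMod n) (p : Prop) [Decidable p] (f : ZMod n → ℂ) :
    (∑ x : ZMod n, if x = i ∨ (i = x + 1 ∧ p) then f x else 0) = f i + if p then f (i-1) else 0 := by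
  have hiff : ∀ x : ZMod n, (i = x + 1) ↔ (x = i - 1) := by
    intro x; rw [eq_sub_iff_add_eq, eq_comm]
  have hne : i ≠ i - 1 := by
    intro h
    have h2 : i + 1 = i := by nth_rewrite 1 [h]; ring
    exact h1 (add_left_cancel (by rw [h2, add_zero]))
  simp_rw [hiff]
  have key : ∀ x : ZMod n, (if x = i ∨ (x = i - 1 ∧ p) then f x else 0)
      = (if x = i then f x else 0) + (if x = i - 1 ∧ p then f x else 0) := by
    intro x
    by_cases hx : x = i <;> by_cases hy : x = i - 1 <;> by_cases hp : p <;> simp_all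
  rw [Finset.sum_congr rfl (fun x _ => key x), Finset.sum_add_distrib]
  congr 1
  · simp
  · by_cases hp : p <;> simp [hp]

lemma sum_or_right (h1 : (1:ZMod n) ≠ 0) (i : ZMod n) (p : Prop) [Decidable p] (f : ZMod n → ℂ) :
    (∑ x : ZMod n, if i = x ∨ (x = i + 1 ∧ p) then f x else 0) = f i + if p then f (i+1) else 0 := by
  have hne : i ≠ i + 1 := by
    intro h
    exact h1 (add_left_cancel (by rw [← h, add_zero]))
  have key : ∀ x : ZMod n, (if i = x ∨ (x = i + 1 ∧ p) then f x else 0)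
      = (if x = i then f x else 0) + (if x = i + 1 ∧ p then f x else 0) := by
    intro x
    by_cases hx : x = i <;> by_cases hy : x = i + 1 <;> by_cases hp : p <;> simp_all [eq_comm]
  rw [Finset.sum_congr rfl (fun x _ => key x), Finset.sum_add_distrib]
  congr 1
  · simp
  · by_cases hp : p <;> simp [hp]

lemma AV (hn : 2 ≤ n) : (W n k).adjMatrix ℂ * Vm n k = Vm n k * Bm n k := by
  have h1 := one_ne_zero_zmod n hn
  ext x y
  rw [Matrix.mul_apply, Matrix.mul_apply]
  rcases x with ⟨i,a⟩|⟨i,a⟩ <;> rcases y with ⟨j,b⟩|⟨j,b⟩ <;>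
    rw [Fintype.sum_sum_type, Fintype.sum_sum_type] <;>
    simp only [SimpleGraph.adjMatrix_apply, Vm_ll, Vm_rr, Vm_lr, Vm_rl, Bm_ll, Bm_rr, Bm_lr,
      Bm_rl, WAdj_lr, WAdj_rl, WAdj_ll, WAdj_rr, if_false, mul_zero, zero_mul,
      Finset.sum_const_zero, add_zero, zero_add]
  · -- v-row, w-column
    rw [Fintype.sum_prod_type, Fintype.sum_prod_type]
    have hL : ∀ i' : ZMod n, (∑ b' : Fin k,
        (if (i' = i ∨ (i = i' + 1 ∧ a = b')) then (1:ℂ) else 0) *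
          (if b' = b then ee n (i'*j) else 0))
        = (if (i' = i ∨ (i = i' + 1 ∧ a = b)) then ee n (i'*j) else 0) := by
      intro i'
      rw [Finset.sum_eq_single b]
      · simp
      · intro c _ hc; simp [hc]
      · simp
    simp_rw [hL]
    rw [sum_or_left n h1 i (a = b) (fun x => ee n (x*j))]
    simp only [mul_ite, ite_mul, mul_zero, zero_mul, Finset.sum_ite_eq, Finset.sum_ite_eq',
      Finset.mem_univ, if_true]
    by_cases hab : a = b <;> simp [hab, mul_add]
    rw [show (i-1)*j = i*j + (-j) by ring, ee_add]
  · -- w-row, v-column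
    rw [Fintype.sum_prod_type, Fintype.sum_prod_type]
    have hL : ∀ i' : ZMod n, (∑ b' : Fin k,
        (if (i = i' ∨ (i' = i + 1 ∧ b' = a)) then (1:ℂ) else 0) *
          (if b' = b then ee n (i'*j) else 0))
        = (if (i = i' ∨ (i' = i + 1 ∧ b = a)) then ee n (i'*j) else 0) := by
      intro i'
      rw [Finset.sum_eq_single b]
      · simp
      · intro c _ hc; simp [hc]
      · simp
    simp_rw [hL]
    rw [sum_or_right n h1 i (b = a) (fun x => ee n (x*j))]
    simp only [mul_ite, ite_mul, mul_zero, zero_mul, Finset.sum_ite_eq, Finset.sum_ite_eq',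
      Finset.mem_univ, if_true]
    by_cases hab : a = b <;> simp [hab, eq_comm, mul_add]
    rw [show (i+1)*j = i*j + j by ring, ee_add]

lemma V_mul_VInv : Vm n k * VmInv n k = (n:ℂ) • 1 := by
  have main : ∀ (i j : ZMod n) (a b : Fin k),
      (∑ x : ZMod n × Fin k,
        (if a = x.2 then ee n (i * x.1) else 0) * (if x.2 = b then ee n (-(x.1 * j)) else 0))
      = if i = j ∧ a = b then (n:ℂ) else 0 := by
    intro i j a b
    rw [Fintype.sum_prod_type]
    have hL : ∀ l : ZMod n, (∑ c : Fin k,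
        (if a = c then ee n (i*l) else 0) * (if c = b then ee n (-(l*j)) else 0))
        = if a = b then ee n (i*l) * ee n (-(l*j)) else 0 := by
      intro l
      rw [Finset.sum_eq_single b]
      · by_cases hab : a = b <;> simp [hab]
      · intro c _ hc; simp [hc]
      · simp
    simp_rw [hL]
    have hmul : ∀ l : ZMod n, ee n (i*l) * ee n (-(l*j)) = ee n (l*(i-j)) := by
      intro l; rw [← ee_add]; congr 1; ring
    by_cases hab : a = b
    · simp only [hab, if_true]
      simp_rw [hmul]
      by_cases hij : i = j
      · subst hij
        simp [ee_zero, Finset.card_univ, ZMod.card, sub_self, mul_zero]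
      · rw [sum_ee n (i-j) (sub_ne_zero.2 hij)]
        simp [hij]
    · simp [hab]
  ext x y
  rw [Matrix.mul_apply]
  rcases x with ⟨i,a⟩|⟨i,a⟩ <;> rcases y with ⟨j,b⟩|⟨j,b⟩ <;>
    rw [Fintype.sum_sum_type] <;>
    simp only [Vm_ll, Vm_rr, Vm_lr, Vm_rl, VmInv_ll, VmInv_rr, VmInv_lr, VmInv_rl,
      mul_zero, zero_mul, Finset.sum_const_zero, add_zero, zero_add]
  · rw [main i j a b]
    simp only [Matrix.smul_apply, Matrix.one_apply, Sum.inl.injEq, Prod.mk.injEq]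
    by_cases h : i = j ∧ a = b <;> simp [h]
  · simp
  · simp
  · rw [main i j a b]
    simp only [Matrix.smul_apply, Matrix.one_apply, Sum.inr.injEq, Prod.mk.injEq]
    by_cases h : i = j ∧ a = b <;> simp [h]

lemma detV_ne : (Vm n k).det ≠ 0 := by
  have h := congrArg Matrix.det (V_mul_VInv n k)
  rw [Matrix.det_mul, Matrix.det_smul, Matrix.det_one, mul_one] at h
  intro h0
  rw [h0, zero_mul] at h
  have hc : ((n:ℂ)) ≠ 0 := Nat.cast_ne_zero.2 (NeZero.ne n)
  exact pow_ne_zero _ hc h.symm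

/- ## charpoly via B -/

lemma charpoly_eq_detB (hn : 2 ≤ n) :
    ((W n k).adjMatrix ℂ).charpoly
      = (Matrix.scalar (WVert n k) (X : ℂ[X]) - (Bm n k).map Polynomial.C).det := by
  have hcomm : charmatrix ((W n k).adjMatrix ℂ) * (Vm n k).map Polynomial.C
      = (Vm n k).map Polynomial.C * (Matrix.scalar (WVert n k) (X : ℂ[X]) - (Bm n k).map Polynomial.C) := by
    rw [charmatrix, sub_mul, mul_sub]
    congr 1
    · exact (scalar_commute (X : ℂ[X]) (fun r' => Commute.all _ _) _).eq
    · rw [RingHom.mapMatrix_apply, ← Matrix.map_mul, AV n k hn, Matrix.map_mul]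
  have hdet := congrArg Matrix.det hcomm
  rw [Matrix.det_mul, Matrix.det_mul] at hdet
  have hV : ((Vm n k).map (Polynomial.C : ℂ →+* ℂ[X])).det = Polynomial.C (Vm n k).det := by
    rw [RingHom.map_det, RingHom.mapMatrix_apply]
  rw [hV] at hdet
  have hVne : (Polynomial.C (Vm n k).det : ℂ[X]) ≠ 0 := by
    simpa using detV_ne n k
  rw [Matrix.charpoly]
  rw [mul_comm (Polynomial.C (Vm n k).det)] at hdet
  exact mul_right_cancel₀ hVne hdet

/- ## block diagonalization -/

def σe : (Fin k ⊕ Fin k) × ZMod n ≃ WVert n k where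
  toFun := fun x => match x with
    | (Sum.inl a, j) => Sum.inl (j, a)
    | (Sum.inr a, j) => Sum.inr (j, a)
  invFun := fun x => match x with
    | Sum.inl (j, a) => (Sum.inl a, j)
    | Sum.inr (j, a) => (Sum.inr a, j)
  left_inv := by rintro ⟨a | a, j⟩ <;> rfl
  right_inv := by rintro (⟨j, a⟩ | ⟨j, a⟩) <;> rfl

noncomputable def Pc (j : ZMod n) : Matrix (Fin k) (Fin k) ℂ :=
  Matrix.of fun a b => 1 + (if a = b then ee n (-j) else 0)

noncomputable def Qc (j : ZMod n) : Matrix (Fin k) (Fin k) ℂ :=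
  Matrix.of fun a b => 1 + (if a = b then ee n j else 0)

noncomputable def blk (j : ZMod n) : Matrix (Fin k ⊕ Fin k) (Fin k ⊕ Fin k) ℂ :=
  Matrix.fromBlocks 0 (Pc n k j) (Qc n k j) 0

lemma Bsub : (Bm n k).submatrix (σe n k) (σe n k)
    = Matrix.blockDiagonal (fun j : ZMod n => blk n k j) := by
  ext x y
  rcases x with ⟨a | a, j⟩ <;> rcases y with ⟨b | b, j'⟩ <;>
    by_cases h : j = j' <;>
    simp [σe, Matrix.blockDiagonal_apply, blk, Pc, Qc, h, Matrix.submatrix_apply,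
      Matrix.fromBlocks_apply₁₂, Matrix.fromBlocks_apply₂₁]

lemma detB_prod :
    (Matrix.scalar (WVert n k) (X : ℂ[X]) - (Bm n k).map Polynomial.C).det
      = ∏ j : ZMod n,
          (Matrix.scalar (Fin k ⊕ Fin k) (X : ℂ[X]) - (blk n k j).map Polynomial.C).det := by
  rw [← Matrix.det_submatrix_equiv_self (σe n k)]
  have hsub : (Matrix.scalar (WVert n k) (X : ℂ[X]) - (Bm n k).map Polynomial.C).submatrix
        (σe n k) (σe n k)
      = Matrix.blockDiagonal
          (fun j : ZMod n => Matrix.scalar (Fin k ⊕ Fin k) (X : ℂ[X]) - (blk n k j).map Polynomial.C) := by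
    have h1 : (fun j : ZMod n =>
        Matrix.scalar (Fin k ⊕ Fin k) (X : ℂ[X]) - (blk n k j).map Polynomial.C)
        = fun j : ZMod n =>
            ((X : ℂ[X]) • (1 : Matrix (Fin k ⊕ Fin k) (Fin k ⊕ Fin k) ℂ[X]))
              - (blk n k j).map Polynomial.C := by
      funext j
      rw [Matrix.scalar_apply, Matrix.smul_one_eq_diagonal]
    rw [h1]
    have h2 : Matrix.blockDiagonal (fun j : ZMod n =>
        ((X : ℂ[X]) • (1 : Matrix (Fin k ⊕ Fin k) (Fin k ⊕ Fin k) ℂ[X]))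
          - (blk n k j).map Polynomial.C)
        = (X : ℂ[X]) • (1 : Matrix ((Fin k ⊕ Fin k) × ZMod n) ((Fin k ⊕ Fin k) × ZMod n) ℂ[X])
          - Matrix.blockDiagonal (fun j => (blk n k j).map Polynomial.C) := by
      rw [show (fun j : ZMod n =>
          ((X : ℂ[X]) • (1 : Matrix (Fin k ⊕ Fin k) (Fin k ⊕ Fin k) ℂ[X]))
            - (blk n k j).map Polynomial.C)
          = (fun _ : ZMod n => ((X : ℂ[X]) • (1 : Matrix (Fin k ⊕ Fin k) (Fin k ⊕ Fin k) ℂ[X])))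
            - (fun j => (blk n k j).map Polynomial.C) from rfl]
      rw [Matrix.blockDiagonal_sub]
      congr 1
      rw [show (fun _ : ZMod n => ((X : ℂ[X]) • (1 : Matrix (Fin k ⊕ Fin k) (Fin k ⊕ Fin k) ℂ[X])))
          = (X : ℂ[X]) • (1 : ZMod n → Matrix (Fin k ⊕ Fin k) (Fin k ⊕ Fin k) ℂ[X])
          from rfl]
      rw [Matrix.blockDiagonal_smul, Matrix.blockDiagonal_one]
    rw [h2]
    have h3 : (Matrix.scalar (WVert n k) (X : ℂ[X]) - (Bm n k).map Polynomial.C).submatrix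
          (σe n k) (σe n k)
        = (Matrix.scalar (WVert n k) (X : ℂ[X])).submatrix (σe n k) (σe n k)
          - ((Bm n k).map Polynomial.C).submatrix (σe n k) (σe n k) := rfl
    rw [h3]
    congr 1
    · rw [Matrix.scalar_apply, ← Matrix.smul_one_eq_diagonal]
      rw [show ((X : ℂ[X]) • (1 : Matrix (WVert n k) (WVert n k) ℂ[X])).submatrix (σe n k) (σe n k)
          = (X : ℂ[X]) • ((1 : Matrix (WVert n k) (WVert n k) ℂ[X]).submatrix (σe n k) (σe n k))
          from rfl]
      rw [Matrix.submatrix_one_equiv]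
    · rw [show ((Bm n k).map Polynomial.C).submatrix (σe n k) (σe n k)
          = ((Bm n k).submatrix (σe n k) (σe n k)).map Polynomial.C from rfl]
      rw [Bsub]
      ext ⟨x, j⟩ ⟨y, j'⟩
      by_cases h : j = j' <;>
        simp [Matrix.blockDiagonal_apply, Matrix.map_apply, h]
  rw [hsub, Matrix.det_blockDiagonal]

/- ## per-block determinant -/

lemma det_block_generic (P Q : Matrix (Fin k) (Fin k) ℂ[X]) :
    (Matrix.fromBlocks (Matrix.scalar (Fin k) (X : ℂ[X])) (-P) (-Q)
        (Matrix.scalar (Fin k) (X : ℂ[X]))).det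
      = (((X : ℂ[X]) ^ 2) • 1 - Q * P).det := by
  have hXcomm := scalar_commute (X : ℂ[X]) (fun r' => Commute.all _ _) Q
  have hL : Matrix.fromBlocks (1 : Matrix (Fin k) (Fin k) ℂ[X]) 0 Q
        (Matrix.scalar (Fin k) (X : ℂ[X])) *
      Matrix.fromBlocks (Matrix.scalar (Fin k) (X : ℂ[X])) (-P) (-Q)
        (Matrix.scalar (Fin k) (X : ℂ[X]))
      = Matrix.fromBlocks (Matrix.scalar (Fin k) (X : ℂ[X])) (-P) 0
        (((X : ℂ[X]) ^ 2) • 1 - Q * P) := by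
    rw [Matrix.fromBlocks_multiply, Matrix.fromBlocks_inj]
    refine ⟨by simp, by simp, ?_, ?_⟩
    · rw [Matrix.mul_neg, hXcomm.eq]
      exact add_neg_cancel _
    · rw [Matrix.mul_neg]
      have hss : Matrix.scalar (Fin k) (X : ℂ[X]) * Matrix.scalar (Fin k) (X : ℂ[X])
          = ((X : ℂ[X]) ^ 2) • 1 := by
        rw [← _root_.map_mul, Matrix.scalar_apply, ← Matrix.smul_one_eq_diagonal, sq]
      rw [hss, neg_add_eq_sub]
  have hdet := congrArg Matrix.det hL
  rw [Matrix.det_mul, Matrix.det_fromBlocks_zero₁₂, Matrix.det_fromBlocks_zero₂₁,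
    Matrix.det_one, one_mul] at hdet
  have hXdet : (Matrix.scalar (Fin k) (X : ℂ[X])).det ≠ 0 := by
    rw [Matrix.scalar_apply, Matrix.det_diagonal, Finset.prod_const]
    exact pow_ne_zero _ Polynomial.X_ne_zero
  exact mul_left_cancel₀ hXdet hdet

lemma blk_fromBlocks_form (j : ZMod n) :
    Matrix.scalar (Fin k ⊕ Fin k) (X : ℂ[X]) - (blk n k j).map Polynomial.C
      = Matrix.fromBlocks (Matrix.scalar (Fin k) (X : ℂ[X])) (-(Pc n k j).map Polynomial.C)
          (-(Qc n k j).map Polynomial.C) (Matrix.scalar (Fin k) (X : ℂ[X])) := by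
  ext x y
  rcases x with a | a <;> rcases y with b | b <;>
    by_cases h : a = b <;>
    simp [blk, Matrix.scalar_apply, Matrix.diagonal_apply, h, Matrix.map_apply,
      Matrix.fromBlocks_apply₁₁, Matrix.fromBlocks_apply₁₂, Matrix.fromBlocks_apply₂₁,
      Matrix.fromBlocks_apply₂₂, Pc, Qc]

/-- all-ones matrix over ℂ -/
def Jc : Matrix (Fin k) (Fin k) ℂ := Matrix.of fun _ _ => 1

lemma QP_eq (j : ZMod n) : Qc n k j * Pc n k j
    = ((k : ℂ) + ee n j + ee n (-j)) • Jc k + 1 := by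
  ext a b
  rw [Matrix.mul_apply]
  have expand : ∀ c : Fin k,
      Qc n k j a c * Pc n k j c b
        = 1 + (if c = b then ee n (-j) else 0) + (if a = c then ee n j else 0)
          + (if a = c then ee n j else 0) * (if c = b then ee n (-j) else 0) := by
    intro c
    simp only [Qc, Pc, Matrix.of_apply]
    ring
  rw [Finset.sum_congr rfl (fun c _ => expand c)]
  rw [Finset.sum_add_distrib, Finset.sum_add_distrib, Finset.sum_add_distrib]
  have h1 : ∑ _c : Fin k, (1 : ℂ) = (k : ℂ) := by
    simp [Finset.card_univ]
  have h2 : (∑ c : Fin k, if c = b then ee n (-j) else 0) = ee n (-j) := by simp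
  have h3 : (∑ c : Fin k, if a = c then ee n j else 0) = ee n j := by simp
  have h4 : (∑ c : Fin k, (if a = c then ee n j else 0) * (if c = b then ee n (-j) else 0))
      = if a = b then (1 : ℂ) else 0 := by
    rw [Finset.sum_eq_single b]
    · by_cases h : a = b <;> simp [h, ee_mul_neg]
    · intro c _ hc; simp [hc]
    · simp
  rw [h1, h2, h3, h4]
  by_cases h : a = b <;>
    simp [h, Jc, Matrix.smul_apply, Matrix.one_apply, Matrix.add_apply] <;> ring

set_option synthInstance.maxHeartbeats 1000000 in
set_option maxHeartbeats 1000000 in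
lemma det_rank_one {k : ℕ} (hk : 1 ≤ k) (y d : ℂ[X]) (hy : y ≠ 0) :
    (y • (1 : Matrix (Fin k) (Fin k) ℂ[X]) - d • (Jc k).map Polynomial.C).det
      = y ^ (k - 1) * (y - (k : ℂ[X]) * d) := by
  set f := algebraMap ℂ[X] (RatFunc ℂ) with hf
  have hinj : Function.Injective f := IsFractionRing.injective ℂ[X] (RatFunc ℂ)
  apply hinj
  rw [RingHom.map_det]
  have hmap : (f.mapMatrix (y • (1 : Matrix (Fin k) (Fin k) ℂ[X]) - d • (Jc k).map Polynomial.C))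
      = f y • (1 : Matrix (Fin k) (Fin k) (RatFunc ℂ))
        - f d • (Matrix.of fun _ _ => (1 : RatFunc ℂ)) := by
    ext a b
    by_cases h : a = b <;>
      simp [RingHom.mapMatrix_apply, Matrix.map_apply, Matrix.sub_apply, Matrix.smul_apply,
        Matrix.one_apply, h, Jc, map_sub, _root_.map_mul]
  rw [hmap]
  have hfy : f y ≠ 0 := fun h => hy (hinj (by simpa using h))
  have key : f y • (1 : Matrix (Fin k) (Fin k) (RatFunc ℂ)) - f d • (Matrix.of fun _ _ => 1)
      = f y • (1 + Matrix.replicateCol Unit (fun _ : Fin k => -(f d / f y))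
          * Matrix.replicateRow Unit (fun _ : Fin k => (1 : RatFunc ℂ))) := by
    ext a b
    by_cases h : a = b <;>
      (simp [Matrix.smul_apply, Matrix.one_apply, Matrix.sub_apply, Matrix.add_apply, h,
        Matrix.mul_apply, Matrix.replicateCol, Matrix.replicateRow, Jc, Finset.sum_const, Finset.card_univ,
        Fintype.sum_unique, mul_add]; field_simp; try ring)
  rw [key, Matrix.det_smul, Matrix.det_one_add_replicateCol_mul_replicateRow]
  have hdot : (fun _ : Fin k => (1 : RatFunc ℂ)) ⬝ᵥ (fun _ : Fin k => -(f d / f y))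
      = -((k : RatFunc ℂ) * (f d / f y)) := by
    simp [dotProduct, Finset.sum_const, Finset.card_univ, nsmul_eq_mul]
  rw [hdot, _root_.map_mul, map_pow, map_sub, _root_.map_mul, map_natCast]
  rw [Fintype.card_fin]
  have hkk : k = (k - 1) + 1 := (Nat.succ_pred_eq_of_pos hk).symm
  conv_lhs => rw [hkk]
  rw [pow_succ]
  field_simp
  push_cast [Nat.cast_sub hk]
  ring

lemma X_sq_sub_one_ne : ((X : ℂ[X]) ^ 2 - 1) ≠ 0 := by
  intro h
  have h2 := congrArg (Polynomial.eval 2) h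
  simp [Polynomial.eval_pow] at h2
  norm_num at h2

lemma det_block_j (hk : 1 ≤ k) (j : ZMod n) :
    (Matrix.scalar (Fin k ⊕ Fin k) (X : ℂ[X]) - (blk n k j).map Polynomial.C).det
      = ((X : ℂ[X]) ^ 2 - 1) ^ (k - 1) *
        ((X : ℂ[X]) ^ 2 - Polynomial.C (1 + (k : ℂ) * ((k : ℂ) + ee n j + ee n (-j)))) := by
  rw [blk_fromBlocks_form, det_block_generic]
  have hQP : ((Qc n k j).map Polynomial.C) * ((Pc n k j).map Polynomial.C)
      = Polynomial.C ((k : ℂ) + ee n j + ee n (-j)) • ((Jc k).map Polynomial.C) + 1 := by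
    rw [← Matrix.map_mul, QP_eq]
    ext a b
    by_cases h : a = b <;>
      simp [Matrix.map_apply, Matrix.add_apply, Matrix.smul_apply, Matrix.one_apply, h, Jc,
        map_add, _root_.map_mul]
  rw [hQP]
  have hrearr : ((X : ℂ[X]) ^ 2) • (1 : Matrix (Fin k) (Fin k) ℂ[X])
      - (Polynomial.C ((k : ℂ) + ee n j + ee n (-j)) • ((Jc k).map Polynomial.C) + 1)
      = ((X : ℂ[X]) ^ 2 - 1) • 1
        - Polynomial.C ((k : ℂ) + ee n j + ee n (-j)) • ((Jc k).map Polynomial.C) := by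
    rw [sub_smul, one_smul]
    abel
  rw [hrearr, det_rank_one hk _ _ X_sq_sub_one_ne]
  congr 1
  rw [← Polynomial.C_eq_natCast, ← Polynomial.C_mul, map_add, Polynomial.C_1]
  ring

lemma ee_cos (j : ZMod n) :
    1 + (k : ℂ) * ((k : ℂ) + ee n j + ee n (-j))
      = (((k : ℝ) ^ 2 + 1 + 2 * k * Real.cos (2 * Real.pi * j.val / n) : ℝ) : ℂ) := by
  set θ : ℝ := 2 * Real.pi * (j.val : ℝ) / (n : ℝ) with hθdef
  have hθ : ee n j = Complex.exp ((θ : ℂ) * Complex.I) := by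
    rw [ee, ζ, ← Complex.exp_nat_mul]
    congr 1
    rw [hθdef]
    push_cast
    ring
  have hneg : ee n (-j) = Complex.exp (-(θ : ℂ) * Complex.I) := by
    have h1 : ee n j * ee n (-j) = 1 := ee_mul_neg n j
    rw [hθ] at h1
    have h2 : ee n (-j) = (Complex.exp ((θ : ℂ) * Complex.I))⁻¹ := by
      rw [mul_comm] at h1
      exact eq_inv_of_mul_eq_one_left h1
    rw [h2, ← Complex.exp_neg, neg_mul]
  rw [hθ, hneg, add_assoc ((k : ℂ)), ← Complex.two_cos, ← Complex.ofReal_cos]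
  push_cast
  ring

lemma prod_zmod_val (f : ℕ → ℂ[X]) : ∏ j : ZMod n, f j.val = ∏ t ∈ Finset.range n, f t := by
  refine Finset.prod_nbij' (fun l : ZMod n => l.val) (fun t => (t : ZMod n)) ?_ ?_ ?_ ?_ ?_
  · intro a _; exact Finset.mem_range.2 (ZMod.val_lt a)
  · intro a _; exact Finset.mem_univ _
  · intro a _; simp [ZMod.natCast_val, ZMod.cast_id]
  · intro a ha; exact ZMod.val_natCast_of_lt (Finset.mem_range.1 ha)
  · intro a _; rfl

lemma charpoly_complex (hn : 2 ≤ n) (hk : 2 ≤ k) :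
    ((W n k).adjMatrix ℂ).charpoly
      = ((X : ℂ[X]) ^ 2 - 1) ^ ((k - 1) * n) *
        ∏ t ∈ Finset.range n,
          ((X : ℂ[X]) ^ 2 -
            Polynomial.C (((k : ℝ) ^ 2 + 1 + 2 * k * Real.cos (2 * Real.pi * t / n) : ℝ) : ℂ)) := by
  rw [charpoly_eq_detB n k hn, detB_prod]
  have hdet : ∀ j : ZMod n,
      (Matrix.scalar (Fin k ⊕ Fin k) (X : ℂ[X]) - (blk n k j).map Polynomial.C).det
        = ((X : ℂ[X]) ^ 2 - 1) ^ (k - 1) *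
          ((X : ℂ[X]) ^ 2 -
            Polynomial.C (((k : ℝ) ^ 2 + 1 + 2 * k * Real.cos (2 * Real.pi * j.val / n) : ℝ) : ℂ)) := by
    intro j
    rw [det_block_j n k (le_trans one_le_two hk) j, ee_cos n k j]
  rw [Finset.prod_congr rfl (fun j _ => hdet j)]
  rw [Finset.prod_mul_distrib, Finset.prod_const, Finset.card_univ, ZMod.card, ← pow_mul]
  congr 1
  exact prod_zmod_val n (fun t =>
    (X : ℂ[X]) ^ 2 -
      Polynomial.C (((k : ℝ) ^ 2 + 1 + 2 * k * Real.cos (2 * Real.pi * t / n) : ℝ) : ℂ))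

end Wcp

theorem W_charpoly (n k : ℕ) [NeZero n] (hn : 2 ≤ n) (hk : 2 ≤ k) :
    ((W n k).adjMatrix ℝ).charpoly =
      (X ^ 2 - 1) ^ ((k - 1) * n) *
        ∏ j ∈ Finset.range n,
          (X ^ 2 - C ((k : ℝ) ^ 2 + 1 + 2 * k * Real.cos (2 * Real.pi * j / n))) := by
  apply Polynomial.map_injective (algebraMap ℝ ℂ) (algebraMap ℝ ℂ).injective
  rw [← Matrix.charpoly_map]
  have hA : ((W n k).adjMatrix ℝ).map (algebraMap ℝ ℂ) = (W n k).adjMatrix ℂ := by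
    ext x y
    simp only [Matrix.map_apply, SimpleGraph.adjMatrix_apply]
    split <;> simp
  rw [hA, Wcp.charpoly_complex n k hn hk]
  rw [Polynomial.map_mul, Polynomial.map_pow, Polynomial.map_sub, Polynomial.map_one,
    Polynomial.map_pow, Polynomial.map_X]
  congr 1
  rw [← Polynomial.coe_mapRingHom, map_prod]
  apply Finset.prod_congr rfl
  intro t _
  simp only [Polynomial.coe_mapRingHom, Polynomial.map_sub, Polynomial.map_pow,
    Polynomial.map_X, Polynomial.map_C]
  rfl
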